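/- Let Q be a left N-invariant probability measure on a compact metric group G with bi-invariant metric, U Haar measure on G, and Qbar = Q * U_N. Then D(Qbar^{*k}, U) <= D(Q^{*k}, U) <= D(Qbar^{*(k-1)}, U) for all k >= 1. -/

import Mathlib

open MeasureTheory
open scoped MeasureTheory

/-- The discrepancy distance between two measures on a metric space. -/
noncomputable def discrepancy {X : Type*} [MetricSpace X] [MeasurableSpace X]
    (P Q : Measure X) : ℝ :=
  ⨆ p : X × {r : ℝ // 0 ≤ r},
    |(P (Metric.closedBall p.1 p.2)).toReal - (Q (Metric.closedBall p.1 p.2)).toReal|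

/-- `k`-fold convolution power of a measure on a group. -/
noncomputable def convPow {G : Type*} [Monoid G] [MeasurableSpace G]
    (μ : Measure G) : ℕ → Measure G
  | 0 => Measure.dirac 1
  | k + 1 => (convPow μ k) ∗ₘ μ

/-- Associativity of the convolution of measures. -/
lemma my_mconv_assoc {M : Type*} [Monoid M] [MeasurableSpace M] [MeasurableMul₂ M]
    (μ ν ρ : Measure M) [SFinite μ] [SFinite ν] [SFinite ρ] :
    (μ ∗ₘ ν) ∗ₘ ρ = μ ∗ₘ (ν ∗ₘ ρ) := by
  have hm : Measurable (fun p : M × M => p.1 * p.2) := measurable_mul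
  unfold Measure.mconv
  conv_lhs => rw [show ρ = ρ.map id by rw [Measure.map_id],
    Measure.map_prod_map _ _ hm measurable_id, Measure.map_map hm (hm.prodMap measurable_id)]
  conv_rhs => rw [show μ = μ.map id by rw [Measure.map_id],
    Measure.map_prod_map _ _ measurable_id hm, Measure.map_map hm (measurable_id.prodMap hm),
    ← Measure.prodAssoc_prod,
    Measure.map_map ((hm.comp (measurable_id.prodMap hm))) MeasurableEquiv.prodAssoc.measurable]
  congr 1
  ext p
  simp [MeasurableEquiv.prodAssoc, mul_assoc]

/-- A Haar probability measure on a compact group is right invariant. -/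
lemma my_haar_right_inv {G : Type*} [Group G] [TopologicalSpace G] [IsTopologicalGroup G]
    [CompactSpace G] [T2Space G] [MeasurableSpace G] [BorelSpace G]
    (U : Measure G) [U.IsHaarMeasure] [IsProbabilityMeasure U] :
    U.IsMulRightInvariant := by
  constructor
  intro g
  set μ' := Measure.map (· * g) U with hμ'
  haveI : IsProbabilityMeasure μ' :=
    Measure.isProbabilityMeasure_map (measurable_mul_const g).aemeasurable
  haveI : μ'.IsMulLeftInvariant := by
    constructor
    intro b
    rw [hμ', Measure.map_map (measurable_const_mul b) (measurable_mul_const g),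
      show ((b * ·) ∘ (· * g)) = ((· * g) ∘ (b * ·)) by ext x; simp [mul_assoc],
      ← Measure.map_map (measurable_mul_const g) (measurable_const_mul b),
      map_mul_left_eq_self]
  have h := Measure.isMulInvariant_eq_smul_of_compactSpace μ' U
  have h2 := congrArg (fun m : Measure G => m Set.univ) h
  simp only [measure_univ, ENNReal.smul_def, Measure.smul_apply, smul_eq_mul, mul_one] at h2
  rw [h, ENNReal.smul_def, ← h2, one_smul]

/-- Convolving a right-invariant measure with a probability measure leaves it unchanged. -/
lemma my_haar_mconv {G : Type*} [Group G] [TopologicalSpace G] [MeasurableSpace G]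
    [MeasurableMul₂ G]
    (U ν : Measure G) [SFinite U] [SFinite ν] [IsProbabilityMeasure ν]
    [U.IsMulRightInvariant] : U ∗ₘ ν = U := by
  have hm : Measurable (fun p : G × G => p.1 * p.2) := measurable_mul
  ext s hs
  rw [Measure.mconv, Measure.map_apply hm hs, Measure.prod_apply_symm (hm hs)]
  have h1 : ∀ y : G, ((fun x => (x, y)) ⁻¹' ((fun p : G × G => p.1 * p.2) ⁻¹' s)) = (· * y) ⁻¹' s :=
    fun y => rfl
  simp_rw [h1, measure_preimage_mul_right U _ s, lintegral_const, measure_univ, mul_one]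

/-- Right convolution with a probability measure does not increase the discrepancy to a
measure which is invariant under that convolution. -/
lemma my_disc_conv_le {G : Type*} [Group G] [MetricSpace G] [MeasurableSpace G]
    [BorelSpace G] [MeasurableMul₂ G]
    (hright : ∀ g x y : G, dist (x * g) (y * g) = dist x y)
    (P ν U : Measure G) [IsProbabilityMeasure P] [IsProbabilityMeasure ν]
    [IsProbabilityMeasure U] (hU : U ∗ₘ ν = U) :
    discrepancy (P ∗ₘ ν) U ≤ discrepancy P U := by
  haveI : Nonempty (G × {r : ℝ // 0 ≤ r}) := ⟨⟨1, ⟨0, le_rfl⟩⟩⟩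
  have hm : Measurable (fun p : G × G => p.1 * p.2) := measurable_mul
  have htoReal : ∀ (μ : Measure G) [IsProbabilityMeasure μ] (s : Set G), (μ s).toReal ≤ 1 := by
    intro μ _ s
    simpa using ENNReal.toReal_mono (by simp) (prob_le_one (μ := μ) (s := s))
  have bdd : BddAbove (Set.range fun p : G × {r : ℝ // 0 ≤ r} =>
      |(P (Metric.closedBall p.1 p.2)).toReal - (U (Metric.closedBall p.1 p.2)).toReal|) := by
    refine ⟨1, ?_⟩
    rintro _ ⟨p, rfl⟩
    refine abs_sub_le_iff.2 ⟨?_, ?_⟩ <;>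
      · refine (sub_le_self _ ENNReal.toReal_nonneg).trans (htoReal _ _)
  have hterm : ∀ p : G × {r : ℝ // 0 ≤ r},
      |(P (Metric.closedBall p.1 p.2)).toReal - (U (Metric.closedBall p.1 p.2)).toReal|
        ≤ discrepancy P U := fun p => le_ciSup bdd p
  refine ciSup_le ?_
  rintro ⟨x, r, hr⟩
  set B := Metric.closedBall x r with hB
  have hBm : MeasurableSet B := Metric.isClosed_closedBall.measurableSet
  set S : G → Set G := fun y => (fun z => (z, y)) ⁻¹' ((fun p : G × G => p.1 * p.2) ⁻¹' B)
    with hSdef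
  have hSball : ∀ y : G, S y = Metric.closedBall (x * y⁻¹) r := by
    intro y
    ext z
    simp only [hSdef, Set.mem_preimage, Metric.mem_closedBall, hB]
    constructor <;> intro h
    · rwa [← hright y z (x * y⁻¹), inv_mul_cancel_right]
    · rwa [← hright y z (x * y⁻¹), inv_mul_cancel_right] at h
  have key : ∀ (μ : Measure G) [SFinite μ], (μ ∗ₘ ν) B = ∫⁻ y, μ (S y) ∂ν := by
    intro μ _
    rw [Measure.mconv, Measure.map_apply hm hBm, Measure.prod_apply_symm (hm hBm)]
  have hmeasP : Measurable fun y => P (S y) := measurable_measure_prodMk_right (hm hBm)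
  have hmeasU : Measurable fun y => U (S y) := measurable_measure_prodMk_right (hm hBm)
  have hintP : Integrable (fun y => (P (S y)).toReal) ν := by
    refine Integrable.mono' (integrable_const (1:ℝ))
      hmeasP.ennreal_toReal.aestronglyMeasurable (ae_of_all _ fun y => ?_)
    rw [Real.norm_eq_abs, abs_of_nonneg ENNReal.toReal_nonneg]
    exact htoReal P _
  have hintU : Integrable (fun y => (U (S y)).toReal) ν := by
    refine Integrable.mono' (integrable_const (1:ℝ))
      hmeasU.ennreal_toReal.aestronglyMeasurable (ae_of_all _ fun y => ?_)
    rw [Real.norm_eq_abs, abs_of_nonneg ENNReal.toReal_nonneg]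
    exact htoReal U _
  have hPB : ((P ∗ₘ ν) B).toReal = ∫ y, (P (S y)).toReal ∂ν := by
    rw [key P, ← integral_toReal hmeasP.aemeasurable (ae_of_all _ fun y => measure_lt_top _ _)]
  have hUB : (U B).toReal = ∫ y, (U (S y)).toReal ∂ν := by
    conv_lhs => rw [← hU]
    rw [key U, ← integral_toReal hmeasU.aemeasurable (ae_of_all _ fun y => measure_lt_top _ _)]
  calc |((P ∗ₘ ν) B).toReal - (U B).toReal|
      = |∫ y, ((P (S y)).toReal - (U (S y)).toReal) ∂ν| := by
        rw [hPB, hUB, integral_sub hintP hintU]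
    _ ≤ ∫ y, |(P (S y)).toReal - (U (S y)).toReal| ∂ν := by
        simpa [Real.norm_eq_abs] using norm_integral_le_integral_norm (μ := ν)
          (fun y => (P (S y)).toReal - (U (S y)).toReal)
    _ ≤ ∫ _y, discrepancy P U ∂ν := by
        refine integral_mono (hintP.sub hintU).abs (integrable_const _) fun y => ?_
        rw [hSball y]
        exact hterm ⟨x * y⁻¹, ⟨r, hr⟩⟩
    _ = discrepancy P U := by simp

instance my_convPow_isProb {G : Type*} [Monoid G] [MeasurableSpace G] [MeasurableMul₂ G]
    (μ : Measure G) [IsProbabilityMeasure μ] (k : ℕ) :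
    IsProbabilityMeasure (convPow μ k) := by
  induction k with
  | zero => rw [convPow]; infer_instance
  | succ n ih => rw [convPow]; infer_instance

/-- `D(Q̄^{*k}, U) ≤ D(Q^{*k}, U) ≤ D(Q̄^{*(k-1)}, U)`. -/
theorem discrepancy_qbar_sandwich {G : Type*} [Group G] [MetricSpace G] [CompactSpace G]
    [IsTopologicalGroup G] [MeasurableSpace G] [BorelSpace G]
    (hleft : ∀ g x y : G, dist (g * x) (g * y) = dist x y)
    (hright : ∀ g x y : G, dist (x * g) (y * g) = dist x y)
    (N : Subgroup G) (hN : IsClosed (N : Set G)) [CompactSpace N] [BorelSpace N]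
    (μN : Measure N) [μN.IsHaarMeasure] [IsProbabilityMeasure μN]
    (Q : Measure G) [IsProbabilityMeasure Q]
    (UN : Measure G) (hUN : UN = μN.map (Subtype.val : N → G))
    (hQ : UN ∗ₘ Q = Q)
    (U : Measure G) [U.IsHaarMeasure] [IsProbabilityMeasure U]
    (k : ℕ) (hk : 1 ≤ k) :
    discrepancy (convPow (Q ∗ₘ UN) k) U ≤ discrepancy (convPow Q k) U ∧
    discrepancy (convPow Q k) U ≤ discrepancy (convPow (Q ∗ₘ UN) (k - 1)) U := by
  haveI : IsProbabilityMeasure UN := by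
    rw [hUN]
    exact Measure.isProbabilityMeasure_map measurable_subtype_coe.aemeasurable
  haveI := my_haar_right_inv U
  have hU1 : U ∗ₘ UN = U := my_haar_mconv U UN
  have hU2 : U ∗ₘ Q = U := my_haar_mconv U Q
  have key : ∀ j : ℕ, convPow (Q ∗ₘ UN) (j + 1) = convPow Q (j + 1) ∗ₘ UN := by
    intro j
    induction j with
    | zero =>
      show convPow (Q ∗ₘ UN) 1 = convPow Q 1 ∗ₘ UN
      simp [convPow]
    | succ n ih =>
      show convPow (Q ∗ₘ UN) (n + 1) ∗ₘ (Q ∗ₘ UN) = (convPow Q (n + 1) ∗ₘ Q) ∗ₘ UN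
      rw [ih, my_mconv_assoc, ← my_mconv_assoc UN Q UN, hQ, ← my_mconv_assoc]
  have key2 : ∀ j : ℕ, convPow Q (j + 1) = convPow (Q ∗ₘ UN) j ∗ₘ Q := by
    intro j
    cases j with
    | zero => show convPow Q 1 = convPow (Q ∗ₘ UN) 0 ∗ₘ Q; simp [convPow]
    | succ n =>
      show convPow Q (n + 1) ∗ₘ Q = convPow (Q ∗ₘ UN) (n + 1) ∗ₘ Q
      rw [key n, my_mconv_assoc, hQ]
  obtain ⟨j, rfl⟩ : ∃ j, k = j + 1 := ⟨k - 1, (Nat.succ_pred_eq_of_pos hk).symm⟩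
  constructor
  · rw [key j]
    exact my_disc_conv_le hright (convPow Q (j + 1)) UN U hU1
  · rw [key2 j, Nat.add_sub_cancel]
    exact my_disc_conv_le hright (convPow (Q ∗ₘ UN) j) Q U hU2
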